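/- Let A be a unital ring and S ⊆ A a unital subring that is spectrally invariant in A, i.e. whenever x ∈ S is invertible in A, its inverse lies in S. Let p ∈ S be an idempotent (p·p = p). Then the corner pSp is spectrally invariant in the corner ring pAp: if x ∈ pSp and y ∈ pAp satisfy x·y = y·x = p, then y ∈ pSp. -/
import Mathlib


/-- If `S` is a spectrally invariant unital subring of a unital ring `A` and `p ∈ S` is an
idempotent, then the corner `pSp` is spectrally invariant in the corner ring `pAp`. -/
theorem stmt_0 (A : Type*) [Ring A] (S : Subring A)
    (hspec : ∀ x : A, x ∈ S → ∀ y : A, x * y = 1 → y * x = 1 → y ∈ S)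
    (p : A) (hpS : p ∈ S) (hp : p * p = p)
    (x y : A)
    (hx : ∃ s ∈ S, x = p * s * p)
    (hy : ∃ a : A, y = p * a * p)
    (hxy : x * y = p) (hyx : y * x = p) :
    ∃ s ∈ S, y = p * s * p := by
  obtain ⟨s, hsS, hxs⟩ := hx
  obtain ⟨a, hya⟩ := hy
  have hxp : x * p = x := by rw [hxs, mul_assoc, hp]
  have hpx : p * x = x := by rw [hxs, ← mul_assoc, ← mul_assoc, hp]
  have hyp : y * p = y := by rw [hya, mul_assoc, hp]
  have hpy : p * y = y := by rw [hya, ← mul_assoc, ← mul_assoc, hp]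
  have hxS : x ∈ S := by rw [hxs]; exact S.mul_mem (S.mul_mem hpS hsS) hpS
  have huS : x + (1 - p) ∈ S := S.add_mem hxS (S.sub_mem S.one_mem hpS)
  have h1 : (x + (1 - p)) * (y + (1 - p)) = 1 := by
    have e1 : x * (1 - p) = 0 := by rw [mul_sub, mul_one, hxp, sub_self]
    have e2 : (1 - p) * y = 0 := by rw [sub_mul, one_mul, hpy, sub_self]
    have e3 : (1 - p) * (1 - p) = 1 - p := by
      rw [sub_mul, one_mul, mul_sub, mul_one, hp]; abel
    calc (x + (1 - p)) * (y + (1 - p))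
        = x * y + x * (1 - p) + ((1 - p) * y + (1 - p) * (1 - p)) := by noncomm_ring
      _ = 1 := by rw [hxy, e1, e2, e3]; abel
  have h2 : (y + (1 - p)) * (x + (1 - p)) = 1 := by
    have e1 : y * (1 - p) = 0 := by rw [mul_sub, mul_one, hyp, sub_self]
    have e2 : (1 - p) * x = 0 := by rw [sub_mul, one_mul, hpx, sub_self]
    have e3 : (1 - p) * (1 - p) = 1 - p := by
      rw [sub_mul, one_mul, mul_sub, mul_one, hp]; abel
    calc (y + (1 - p)) * (x + (1 - p))
        = y * x + y * (1 - p) + ((1 - p) * x + (1 - p) * (1 - p)) := by noncomm_ring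
      _ = 1 := by rw [hyx, e1, e2, e3]; abel
  have hvS : y + (1 - p) ∈ S := hspec _ huS _ h1 h2
  have hyS : y ∈ S := by
    have := S.sub_mem hvS (S.sub_mem S.one_mem hpS)
    simpa using this
  exact ⟨y, hyS, by rw [hpy, hyp]⟩
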